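/- (Proposition 1) Assume the ball-constraint assumption and assume (OPF) is feasible (some x ∈ ℝ^{2n} satisfies xᵀA_k x ≤ b_k for all k ∈ K). Then there is no duality gap between (SDP) and (DSDP): the infimum of ⟨C,X⟩ over the (SDP) feasible set equals the supremum of Σ_{k∈K} −b_k α_k over the (DSDP) feasible set. -/

import Mathlib

open Matrix

set_option maxHeartbeats 1000000

noncomputable section

/-- Trace inner product ⟨A,B⟩ = trace(AB). -/
def ip {m : ℕ} (A B : Matrix (Fin m) (Fin m) ℝ) : ℝ := (A * B).trace

/-- Quadratic form xᵀ A x. -/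
def qf {m : ℕ} (A : Matrix (Fin m) (Fin m) ℝ) (x : Fin m → ℝ) : ℝ := x ⬝ᵥ A.mulVec x

/-- Index of the real part of the voltage at node `i` among the `2n` coordinates. -/
def idx1 (n : ℕ) (i : Fin n) : Fin (2 * n) := ⟨i.val, by have := i.isLt; omega⟩

/-- Index of the imaginary part of the voltage at node `i` among the `2n` coordinates. -/
def idx2 (n : ℕ) (i : Fin n) : Fin (2 * n) := ⟨i.val + n, by have := i.isLt; omega⟩

/-- The matrix of the ball constraint at node `i`: diagonal, with ones exactly in
positions `(i,i)` and `(i+n, i+n)`. -/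
def ballMat (n : ℕ) (i : Fin n) : Matrix (Fin (2 * n)) (Fin (2 * n)) ℝ :=
  Matrix.diagonal (fun j => if j = idx1 n i ∨ j = idx2 n i then 1 else 0)

section Aux

variable {m : ℕ}

lemma ip_add_left (A B X : Matrix (Fin m) (Fin m) ℝ) : ip (A + B) X = ip A X + ip B X := by
  simp [ip, add_mul]

lemma ip_smul_left (c : ℝ) (A X : Matrix (Fin m) (Fin m) ℝ) : ip (c • A) X = c * ip A X := by
  simp [ip, smul_mul_assoc]

lemma ip_sum_left {ι : Type*} (s : Finset ι) (A : ι → Matrix (Fin m) (Fin m) ℝ)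
    (X : Matrix (Fin m) (Fin m) ℝ) : ip (∑ k ∈ s, A k) X = ∑ k ∈ s, ip (A k) X := by
  simp [ip, Finset.sum_mul, Matrix.trace_sum]

lemma ip_add_right (A X Y : Matrix (Fin m) (Fin m) ℝ) : ip A (X + Y) = ip A X + ip A Y := by
  simp [ip, mul_add]

lemma ip_smul_right (c : ℝ) (A X : Matrix (Fin m) (Fin m) ℝ) : ip A (c • X) = c * ip A X := by
  simp [ip, mul_smul_comm]

lemma ip_zero_right (A : Matrix (Fin m) (Fin m) ℝ) : ip A 0 = 0 := by simp [ip]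

lemma ip_one_left (X : Matrix (Fin m) (Fin m) ℝ) : ip 1 X = X.trace := by simp [ip]

lemma qf_eq_ip (A : Matrix (Fin m) (Fin m) ℝ) (x : Fin m → ℝ) :
    ip A (vecMulVec x x) = qf A x := by
  simp only [ip, qf, Matrix.trace, Matrix.diag, Matrix.mul_apply, vecMulVec_apply,
    dotProduct, Matrix.mulVec, Finset.mul_sum]
  exact Finset.sum_congr rfl fun i _ => Finset.sum_congr rfl fun j _ => by ring

lemma psd_vecMulVec (x : Fin m → ℝ) : (vecMulVec x x).PosSemidef := by
  rw [Matrix.posSemidef_iff_dotProduct_mulVec]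
  constructor
  · ext i j
    simp [vecMulVec_apply, mul_comm, Matrix.conjTranspose_apply]
  · intro y
    have h : (vecMulVec x x) *ᵥ y = (x ⬝ᵥ y) • x := by
      ext i
      simp only [Matrix.mulVec, vecMulVec_apply, dotProduct, Pi.smul_apply, smul_eq_mul,
        Finset.sum_mul]
      exact Finset.sum_congr rfl fun j _ => by ring
    rw [h]
    simp only [star_trivial, dotProduct_smul, smul_eq_mul]
    rw [show y ⬝ᵥ x = x ⬝ᵥ y from dotProduct_comm _ _]
    exact mul_self_nonneg _

lemma ip_nonneg {M X : Matrix (Fin m) (Fin m) ℝ} (hM : M.PosSemidef) (hX : X.PosSemidef) :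
    0 ≤ ip M X := by
  obtain ⟨B, hB⟩ : ∃ B : Matrix (Fin m) (Fin m) ℝ, M = Bᴴ * B := by
    open scoped MatrixOrder in
    obtain ⟨B, hB⟩ := CStarAlgebra.nonneg_iff_eq_star_mul_self.mp hM.nonneg
    exact ⟨B, hB⟩
  obtain ⟨D, hD⟩ : ∃ D : Matrix (Fin m) (Fin m) ℝ, X = Dᴴ * D := by
    open scoped MatrixOrder in
    obtain ⟨D, hD⟩ := CStarAlgebra.nonneg_iff_eq_star_mul_self.mp hX.nonneg
    exact ⟨D, hD⟩
  have hBt : Bᴴ = Bᵀ := by ext i j; simp [Matrix.conjTranspose_apply]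
  have hDt : Dᴴ = Dᵀ := by ext i j; simp [Matrix.conjTranspose_apply]
  rw [ip, hB, hD, hBt, hDt]
  have : (Bᵀ * B * (Dᵀ * D)).trace = ((B * Dᵀ) * (B * Dᵀ)ᵀ).trace := by
    rw [Matrix.transpose_mul, Matrix.transpose_transpose]
    rw [show Bᵀ * B * (Dᵀ * D) = Bᵀ * (B * Dᵀ * D) by noncomm_ring]
    rw [Matrix.trace_mul_comm, Matrix.mul_assoc]
  rw [this]
  simp only [Matrix.trace, Matrix.diag, Matrix.mul_apply, Matrix.transpose_apply]
  exact Finset.sum_nonneg fun i _ => Finset.sum_nonneg fun j _ => mul_self_nonneg _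

lemma psd_qf {X : Matrix (Fin m) (Fin m) ℝ} (hX : X.PosSemidef) (x : Fin m → ℝ) :
    0 ≤ qf X x := by simpa [qf] using hX.dotProduct_mulVec_nonneg x

lemma qf_single_single (X : Matrix (Fin m) (Fin m) ℝ) (i j : Fin m) (c d : ℝ) :
    qf X (Pi.single i c + Pi.single j d) =
      c * X i i * c + c * X i j * d + d * X j i * c + d * X j j * d := by
  simp [qf, dotProduct_add, add_dotProduct, Matrix.mulVec_add, Matrix.mulVec_single,
    single_dotProduct, dotProduct_single]
  ring

lemma psd_diag_nonneg {X : Matrix (Fin m) (Fin m) ℝ} (hX : X.PosSemidef) (i : Fin m) :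
    0 ≤ X i i := by
  have := psd_qf hX (Pi.single i 1)
  simpa [qf, Matrix.mulVec_single, single_dotProduct] using this

lemma psd_diag_le_trace {X : Matrix (Fin m) (Fin m) ℝ} (hX : X.PosSemidef) (i : Fin m) :
    X i i ≤ X.trace := by
  rw [Matrix.trace]
  exact Finset.single_le_sum (fun j _ => psd_diag_nonneg hX j) (Finset.mem_univ i)

lemma psd_entry_bound {X : Matrix (Fin m) (Fin m) ℝ} (hX : X.PosSemidef) {T : ℝ}
    (hT : X.trace ≤ T) (i j : Fin m) : |X i j| ≤ T := by
  have hdiag : ∀ p : Fin m, X p p ≤ T := fun p => (psd_diag_le_trace hX p).trans hT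
  by_cases hij : i = j
  · subst hij
    rw [abs_of_nonneg (psd_diag_nonneg hX i)]; exact hdiag i
  · have hsym : X j i = X i j := by
      have := hX.1
      have h := congrFun (congrFun this i) j
      simpa [Matrix.conjTranspose_apply] using h
    have h1 := psd_qf hX (Pi.single i 1 + Pi.single j 1)
    have h2 := psd_qf hX (Pi.single i 1 + Pi.single j (-1))
    rw [qf_single_single] at h1 h2
    rw [abs_le]
    constructor <;> nlinarith [hdiag i, hdiag j, psd_diag_nonneg hX i, psd_diag_nonneg hX j]

/-- The set of PSD matrices with trace at most `T` is compact. -/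
lemma isCompact_psd_trace_le (T : ℝ) :
    IsCompact {X : Matrix (Fin m) (Fin m) ℝ | X.PosSemidef ∧ X.trace ≤ T} := by
  have hsub : {X : Matrix (Fin m) (Fin m) ℝ | X.PosSemidef ∧ X.trace ≤ T} ⊆
      Set.pi Set.univ (fun _ : Fin m => Set.pi Set.univ
        (fun _ : Fin m => Set.Icc (-T) T)) := by
    rintro X ⟨hX, hXT⟩ i _ j _
    have := psd_entry_bound hX hXT i j
    rw [abs_le] at this
    exact ⟨this.1, this.2⟩
  have hcomp : IsCompact (Set.pi Set.univ (fun _ : Fin m => Set.pi Set.univ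
      (fun _ : Fin m => Set.Icc (-T : ℝ) T))) :=
    isCompact_univ_pi fun _ => isCompact_univ_pi fun _ => isCompact_Icc
  refine hcomp.of_isClosed_subset ?_ hsub
  have hcont : ∀ (i j : Fin m), Continuous fun X : Matrix (Fin m) (Fin m) ℝ => X i j :=
    fun i j => (continuous_apply j).comp (continuous_apply i)
  have h1 : IsClosed {X : Matrix (Fin m) (Fin m) ℝ | X.PosSemidef} := by
    have : {X : Matrix (Fin m) (Fin m) ℝ | X.PosSemidef} =
        (⋂ (i : Fin m) (j : Fin m), {X | X j i = X i j}) ∩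
        (⋂ x : Fin m → ℝ, {X | 0 ≤ x ⬝ᵥ X.mulVec x}) := by
      ext X
      simp only [Set.mem_setOf_eq, Set.mem_inter_iff, Set.mem_iInter]
      rw [Matrix.posSemidef_iff_dotProduct_mulVec]
      constructor
      · rintro ⟨hh, hq⟩
        refine ⟨fun i j => ?_, fun x => by simpa using hq x⟩
        have := congrFun (congrFun hh i) j
        simpa [Matrix.conjTranspose_apply] using this
      · rintro ⟨hh, hq⟩
        refine ⟨?_, fun x => by simpa using hq x⟩
        ext i j
        simpa [Matrix.conjTranspose_apply] using hh i j
    rw [this]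
    refine IsClosed.inter (isClosed_iInter fun i => isClosed_iInter fun j =>
      isClosed_eq (hcont j i) (hcont i j)) (isClosed_iInter fun x => ?_)
    have : Continuous fun X : Matrix (Fin m) (Fin m) ℝ => x ⬝ᵥ X.mulVec x := by
      simp only [dotProduct, Matrix.mulVec]
      refine continuous_finset_sum _ fun i _ => Continuous.mul continuous_const ?_
      exact continuous_finset_sum _ fun j _ => ((hcont i j).mul continuous_const)
    exact isClosed_le continuous_const this
  have h2 : IsClosed {X : Matrix (Fin m) (Fin m) ℝ | X.trace ≤ T} := by
    have : Continuous fun X : Matrix (Fin m) (Fin m) ℝ => X.trace :=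
      continuous_finset_sum _ fun i _ => hcont i i
    exact isClosed_le this continuous_const
  exact h1.inter h2

lemma continuous_ip (A : Matrix (Fin m) (Fin m) ℝ) :
    Continuous fun X : Matrix (Fin m) (Fin m) ℝ => ip A X := by
  have hcont : ∀ (i j : Fin m), Continuous fun X : Matrix (Fin m) (Fin m) ℝ => X i j :=
    fun i j => (continuous_apply j).comp (continuous_apply i)
  simp only [ip, Matrix.trace, Matrix.diag, Matrix.mul_apply]
  exact continuous_finset_sum _ fun i _ => continuous_finset_sum _ fun j _ =>
    continuous_const.mul (hcont j i)

lemma abs_qf_le (C : Matrix (Fin m) (Fin m) ℝ) (x : Fin m → ℝ) :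
    |qf C x| ≤ (∑ p, ∑ q, |C p q|) * (∑ l, x l ^ 2) := by
  have hx : ∀ p, x p ^ 2 ≤ ∑ l, x l ^ 2 := fun p =>
    Finset.single_le_sum (fun l _ => sq_nonneg (x l)) (Finset.mem_univ p)
  have key : ∀ p q : Fin m, |x p * C p q * x q| ≤ |C p q| * (∑ l, x l ^ 2) := by
    intro p q
    rw [abs_mul, abs_mul]
    have h1 : |x p| * |x q| ≤ ∑ l, x l ^ 2 := by
      nlinarith [hx p, hx q, sq_nonneg (|x p| - |x q|), abs_nonneg (x p), abs_nonneg (x q),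
        sq_abs (x p), sq_abs (x q)]
    calc |x p| * |C p q| * |x q| = |C p q| * (|x p| * |x q|) := by ring
      _ ≤ |C p q| * (∑ l, x l ^ 2) := mul_le_mul_of_nonneg_left h1 (abs_nonneg _)
  have hqf : qf C x = ∑ p, ∑ q, x p * C p q * x q := by
    simp [qf, dotProduct, Matrix.mulVec, Finset.mul_sum, mul_assoc]
  rw [hqf, Finset.sum_mul]
  calc |∑ p, ∑ q, x p * C p q * x q| ≤ ∑ p, |∑ q, x p * C p q * x q| :=
        Finset.abs_sum_le_sum_abs _ _
    _ ≤ ∑ p, ∑ q, |x p * C p q * x q| :=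
        Finset.sum_le_sum fun p _ => Finset.abs_sum_le_sum_abs _ _
    _ ≤ ∑ p, ∑ q, |C p q| * (∑ l, x l ^ 2) :=
        Finset.sum_le_sum fun p _ => Finset.sum_le_sum fun q _ => key p q
    _ = ∑ p, (∑ q, |C p q|) * (∑ l, x l ^ 2) :=
        Finset.sum_congr rfl fun p _ => (Finset.sum_mul _ _ _).symm

lemma isHermitian_of_isSymm {M : Matrix (Fin m) (Fin m) ℝ} (h : M.IsSymm) :
    M.IsHermitian := by
  rw [Matrix.IsHermitian]
  ext i j
  have := congrFun (congrFun h i) j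
  simpa [Matrix.conjTranspose_apply, Matrix.transpose_apply] using this

lemma posSemidef_of_symm_qf {M : Matrix (Fin m) (Fin m) ℝ} (h : M.IsSymm)
    (hq : ∀ x, 0 ≤ qf M x) : M.PosSemidef :=
  Matrix.posSemidef_iff_dotProduct_mulVec.mpr ⟨isHermitian_of_isSymm h, fun x => by simpa [qf] using hq x⟩

lemma qf_add (A B : Matrix (Fin m) (Fin m) ℝ) (x : Fin m → ℝ) :
    qf (A + B) x = qf A x + qf B x := by
  simp [qf, Matrix.add_mulVec, dotProduct_add]

lemma qf_smul (c : ℝ) (A : Matrix (Fin m) (Fin m) ℝ) (x : Fin m → ℝ) :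
    qf (c • A) x = c * qf A x := by
  simp [qf, Matrix.smul_mulVec, dotProduct_smul]

lemma qf_one (x : Fin m → ℝ) : qf (1 : Matrix (Fin m) (Fin m) ℝ) x = ∑ l, x l ^ 2 := by
  simp [qf, Matrix.one_mulVec, dotProduct, sq]

lemma qf_sum {ι : Type*} (s : Finset ι) (A : ι → Matrix (Fin m) (Fin m) ℝ) (x : Fin m → ℝ) :
    qf (∑ k ∈ s, A k) x = ∑ k ∈ s, qf (A k) x := by
  induction s using Finset.cons_induction with
  | empty => simp [qf]
  | cons k s hk ih => rw [Finset.sum_cons, Finset.sum_cons, qf_add, ih]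

lemma psd_smul {X : Matrix (Fin m) (Fin m) ℝ} (hX : X.PosSemidef) {c : ℝ} (hc : 0 ≤ c) :
    (c • X).PosSemidef := by
  refine Matrix.posSemidef_iff_dotProduct_mulVec.mpr ⟨?_, fun x => ?_⟩
  · rw [Matrix.IsHermitian, Matrix.conjTranspose_smul, hX.1]
    congr 1
  · have := hX.dotProduct_mulVec_nonneg x
    simp only [Matrix.smul_mulVec, dotProduct_smul, smul_eq_mul] at *
    exact mul_nonneg hc this

lemma sum_ballMat (n : ℕ) : ∑ i, ballMat n i = (1 : Matrix (Fin (2*n)) (Fin (2*n)) ℝ) := by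
  ext p q
  rw [Matrix.sum_apply]
  by_cases hpq : p = q
  · subst hpq
    simp only [ballMat, Matrix.one_apply_eq, Matrix.diagonal_apply_eq]
    have hlt : p.val < 2 * n := p.isLt
    set i₀ : Fin n := if h : p.val < n then ⟨p.val, h⟩ else ⟨p.val - n, by omega⟩ with hi₀
    rw [Finset.sum_eq_single i₀]
    · have : p = idx1 n i₀ ∨ p = idx2 n i₀ := by
        by_cases h : p.val < n
        · left; simp [hi₀, h, idx1, Fin.ext_iff]
        · right; simp [hi₀, h, idx2, Fin.ext_iff]; omega
      simp [this]
    · intro i _ hne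
      rw [if_neg]
      rintro (h | h)
      · have hv : (p : ℕ) = i.val := by simpa [idx1, Fin.ext_iff] using h
        have hpn : (p : ℕ) < n := by have := i.isLt; omega
        exact hne (Fin.ext (by simp [hi₀, hpn, hv]))
      · have hv : (p : ℕ) = i.val + n := by simpa [idx2, Fin.ext_iff] using h
        have hpn : ¬ (p : ℕ) < n := by omega
        exact hne (Fin.ext (by simp [hi₀, hpn, hv]))
    · intro h; exact absurd (Finset.mem_univ _) h
  · have h0 : ∀ i : Fin n, ballMat n i p q = 0 := fun i =>
      Matrix.diagonal_apply_ne _ hpq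
    simp [h0, Matrix.one_apply_ne hpq]

lemma clm_decomp {K : Type} [Fintype K] [DecidableEq K] (f : ((K → ℝ) × ℝ) →L[ℝ] ℝ)
    (w : K → ℝ) (t : ℝ) :
    f (w, t) = (∑ k, w k * f (Pi.single k 1, 0)) + t * f (0, 1) := by
  have hs : ∀ k : K, w k • (Pi.single k 1 : K → ℝ) = Pi.single k (w k) := fun k => by
    rw [← Pi.single_smul]; norm_num
  have h1 : ((w, t) : (K → ℝ) × ℝ)
      = (∑ k, (w k) • ((Pi.single k 1 : K → ℝ), (0:ℝ))) + t • ((0 : K → ℝ), (1:ℝ)) := by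
    apply Prod.ext
    · simp only [Prod.fst_add, Prod.fst_sum, Prod.smul_mk, Prod.smul_fst]
      rw [Finset.sum_congr rfl fun k _ => hs k, Finset.univ_sum_single]
      simp
    · simp only [Prod.snd_add, Prod.snd_sum, Prod.smul_mk, Prod.smul_snd]
      simp
  rw [h1, map_add, map_sum]
  simp only [_root_.map_smul, smul_eq_mul]

end Aux

/-- Proposition 1: under the ball-constraint assumption, if (OPF) is feasible
then there is no duality gap between (SDP) and (DSDP). -/
theorem stmt_3 {n : ℕ} (hn : 0 < n) {K : Type} [Fintype K]
    (C : Matrix (Fin (2 * n)) (Fin (2 * n)) ℝ) (hC : C.IsSymm)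
    (A : K → Matrix (Fin (2 * n)) (Fin (2 * n)) ℝ) (hA : ∀ k, (A k).IsSymm)
    (b : K → ℝ)
    (e : Fin n → K) (he : Function.Injective e)
    (V : Fin n → ℝ) (hV : ∀ i, 0 < V i)
    (hball : ∀ i : Fin n, A (e i) = ballMat n i)
    (hb : ∀ i : Fin n, b (e i) = (V i) ^ 2)
    (hfeas : ∃ x : Fin (2 * n) → ℝ, ∀ k, qf (A k) x ≤ b k) :
    sInf {v : ℝ | ∃ X : Matrix (Fin (2 * n)) (Fin (2 * n)) ℝ,
            X.IsSymm ∧ X.PosSemidef ∧ (∀ k, ip (A k) X ≤ b k) ∧ v = ip C X}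
      = sSup {v : ℝ | ∃ α : K → ℝ, (∀ k, 0 ≤ α k) ∧
            (C + ∑ k, α k • A k).PosSemidef ∧ v = ∑ k, -(b k) * α k} := by
  classical
  obtain ⟨x₀, hx₀⟩ := hfeas
  set P := {v : ℝ | ∃ X : Matrix (Fin (2 * n)) (Fin (2 * n)) ℝ,
      X.IsSymm ∧ X.PosSemidef ∧ (∀ k, ip (A k) X ≤ b k) ∧ v = ip C X} with hPdef
  set D := {v : ℝ | ∃ α : K → ℝ, (∀ k, 0 ≤ α k) ∧
      (C + ∑ k, α k • A k).PosSemidef ∧ v = ∑ k, -(b k) * α k} with hDdef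
  -- primal feasible point
  set X₀ := vecMulVec x₀ x₀ with hX₀def
  have hX₀psd : X₀.PosSemidef := psd_vecMulVec x₀
  have hX₀symm : X₀.IsSymm := by
    rw [Matrix.IsSymm]; ext i j; simp [hX₀def, vecMulVec_apply, mul_comm]
  have hX₀feas : ∀ k, ip (A k) X₀ ≤ b k := fun k => by
    rw [hX₀def, qf_eq_ip]; exact hx₀ k
  have hPmem : ip C X₀ ∈ P := ⟨X₀, hX₀symm, hX₀psd, hX₀feas, rfl⟩
  have hPne : P.Nonempty := ⟨_, hPmem⟩
  -- weak duality
  have hweak : ∀ v ∈ P, ∀ w ∈ D, w ≤ v := by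
    rintro v ⟨X, _, hXpsd, hXfeas, rfl⟩ w ⟨α, hα, hαpsd, rfl⟩
    have h0 : 0 ≤ ip (C + ∑ k, α k • A k) X := ip_nonneg hαpsd hXpsd
    rw [ip_add_left, ip_sum_left] at h0
    have h0' : 0 ≤ ip C X + ∑ k, α k * ip (A k) X := by
      simpa [ip_smul_left] using h0
    have hle : ∑ k, α k * ip (A k) X ≤ ∑ k, α k * b k :=
      Finset.sum_le_sum fun k _ => mul_le_mul_of_nonneg_left (hXfeas k) (hα k)
    have hw : ∑ k, -(b k) * α k = -(∑ k, α k * b k) := by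
      rw [← Finset.sum_neg_distrib]
      exact Finset.sum_congr rfl fun k _ => by ring
    rw [hw]; linarith
  -- dual feasible point
  set t := ∑ p, ∑ q, |C p q| with htdef
  have ht : 0 ≤ t := Finset.sum_nonneg fun p _ => Finset.sum_nonneg fun q _ => abs_nonneg _
  set α₀ : K → ℝ := fun k => if k ∈ Finset.image e Finset.univ then t else 0 with hα₀def
  have hα₀sum : (∑ k, α₀ k • A k) = t • (1 : Matrix (Fin (2*n)) (Fin (2*n)) ℝ) := by
    have h1 : ∀ k, α₀ k • A k = if k ∈ Finset.image e Finset.univ then t • A k else 0 := by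
      intro k
      by_cases h : k ∈ Finset.image e Finset.univ
      · simp only [hα₀def, h, if_true]
      · simp only [hα₀def, h, if_false, zero_smul]
    rw [Finset.sum_congr rfl fun k _ => h1 k, Finset.sum_ite_mem, Finset.univ_inter,
      Finset.sum_image (fun i _ j _ h => he h)]
    have : ∀ i : Fin n, t • A (e i) = t • ballMat n i := fun i => by rw [hball]
    rw [Finset.sum_congr rfl fun i _ => this i, ← Finset.smul_sum, sum_ballMat]
  have hdual₀ : (C + ∑ k, α₀ k • A k).PosSemidef := by
    rw [hα₀sum]
    refine posSemidef_of_symm_qf ?_ ?_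
    · rw [Matrix.IsSymm, Matrix.transpose_add, hC, Matrix.transpose_smul,
        Matrix.transpose_one]
    · intro x
      rw [qf_add, qf_smul, qf_one]
      have := abs_qf_le C x
      have h2 := neg_abs_le (qf C x)
      linarith
  have hDmem : (∑ k, -(b k) * α₀ k) ∈ D := ⟨α₀, fun k => by positivity, hdual₀, rfl⟩
  have hDne : D.Nonempty := ⟨_, hDmem⟩
  have hPbdd : BddBelow P := ⟨_, fun v hv => hweak v hv _ hDmem⟩
  have hDbdd : BddAbove D := ⟨_, fun w hw => hweak _ hPmem w hw⟩
  have hsup_le : sSup D ≤ sInf P :=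
    le_csInf hPne fun v hv => csSup_le hDne fun w hw => hweak v hv w hw
  refine le_antisymm ?_ hsup_le
  -- strong duality direction
  by_contra hcon
  push_neg at hcon
  set ε := (sInf P - sSup D) / 2 with hεdef
  have hε : 0 < ε := by simp [hεdef]; linarith
  suffices h : sInf P ≤ sSup D + ε by simp [hεdef] at h; linarith
  set pstar := sInf P with hpstar
  -- the convex set for separation
  set 𝒜 : Set ((K → ℝ) × ℝ) := {p | ∃ X : Matrix (Fin (2*n)) (Fin (2*n)) ℝ,
      X.PosSemidef ∧ (∀ k, ip (A k) X - b k ≤ p.1 k) ∧ ip C X ≤ p.2} with h𝒜def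
  have hconv : Convex ℝ 𝒜 := by
    rintro p ⟨X, hX, h1, h2⟩ q ⟨Y, hY, g1, g2⟩ a c ha hc hac
    refine ⟨a • X + c • Y, (psd_smul hX ha).add (psd_smul hY hc), fun k => ?_, ?_⟩
    · rw [ip_add_right, ip_smul_right, ip_smul_right]
      have h1k := mul_le_mul_of_nonneg_left (h1 k) ha
      have g1k := mul_le_mul_of_nonneg_left (g1 k) hc
      have e1 : a * (ip (A k) X - b k) = a * ip (A k) X - a * b k := by ring
      have e2 : c * (ip (A k) Y - b k) = c * ip (A k) Y - c * b k := by ring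
      have e3 : a * b k + c * b k = b k := by rw [← add_mul, hac, one_mul]
      have : (a • p + c • q).1 k = a * p.1 k + c * q.1 k := by simp
      rw [this]
      linarith
    · rw [ip_add_right, ip_smul_right, ip_smul_right]
      have h2' := mul_le_mul_of_nonneg_left h2 ha
      have g2' := mul_le_mul_of_nonneg_left g2 hc
      have : (a • p + c • q).2 = a * p.2 + c * q.2 := by simp
      rw [this]
      linarith
  haveI : FirstCountableTopology (Matrix (Fin (2*n)) (Fin (2*n)) ℝ) :=
    inferInstanceAs (FirstCountableTopology (Fin (2*n) → Fin (2*n) → ℝ))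
  have hclosed : IsClosed 𝒜 := by
    refine IsSeqClosed.isClosed ?_
    intro pseq p hmem htend
    have hcd1 : ∀ k, Filter.Tendsto (fun j => (pseq j).1 k) Filter.atTop (nhds (p.1 k)) :=
      fun k => (((continuous_apply k).comp continuous_fst).tendsto p).comp htend
    have hcd2 : Filter.Tendsto (fun j => (pseq j).2) Filter.atTop (nhds p.2) :=
      (continuous_snd.tendsto p).comp htend
    set s := ∑ i : Fin n, p.1 (e i) with hsdef
    have hsums : Filter.Tendsto (fun j => ∑ i : Fin n, (pseq j).1 (e i))
        Filter.atTop (nhds s) := tendsto_finset_sum _ fun i _ => hcd1 (e i)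
    have hev : ∀ᶠ j in Filter.atTop, ∑ i : Fin n, (pseq j).1 (e i) < s + 1 :=
      hsums.eventually (eventually_lt_nhds (lt_add_one s))
    obtain ⟨N, hN⟩ := Filter.eventually_atTop.mp hev
    choose Xs hXs1 hXs2 hXs3 using hmem
    set T := (∑ i : Fin n, b (e i)) + (s + 1) with hTdef
    have htrace : ∀ j, X₀.trace = X₀.trace → (Xs (j + N)).trace ≤ T := by
      intro j _
      have h1 : (Xs (j + N)).trace = ∑ i : Fin n, ip (A (e i)) (Xs (j + N)) := by
        rw [← ip_one_left, ← sum_ballMat n, ip_sum_left]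
        exact Finset.sum_congr rfl fun i _ => by rw [hball]
      have h2 : ∑ i : Fin n, ip (A (e i)) (Xs (j + N)) ≤
          ∑ i : Fin n, (b (e i) + (pseq (j + N)).1 (e i)) :=
        Finset.sum_le_sum fun i _ => by have := hXs2 (j + N) (e i); linarith
      have h3 : ∑ i : Fin n, (pseq (j + N)).1 (e i) < s + 1 := hN _ (Nat.le_add_left N j)
      rw [h1, hTdef]
      rw [Finset.sum_add_distrib] at h2
      linarith
    have hmemS : ∀ j, Xs (j + N) ∈
        {X : Matrix (Fin (2*n)) (Fin (2*n)) ℝ | X.PosSemidef ∧ X.trace ≤ T} :=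
      fun j => ⟨hXs1 _, htrace j rfl⟩
    obtain ⟨Xlim, hXlim, φ, hφ, hφtend⟩ :=
      (isCompact_psd_trace_le T).tendsto_subseq hmemS
    have hφN : Filter.Tendsto (fun j => φ j + N) Filter.atTop Filter.atTop :=
      Filter.tendsto_atTop_mono (fun j => Nat.le_add_right (φ j) N) hφ.tendsto_atTop
    refine ⟨Xlim, hXlim.1, fun k => ?_, ?_⟩
    · have ht1 : Filter.Tendsto (fun j => ip (A k) (Xs (φ j + N)) - b k)
          Filter.atTop (nhds (ip (A k) Xlim - b k)) :=
        (((continuous_ip (A k)).tendsto Xlim).comp hφtend).sub_const _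
      have ht2 : Filter.Tendsto (fun j => (pseq (φ j + N)).1 k)
          Filter.atTop (nhds (p.1 k)) := (hcd1 k).comp hφN
      exact le_of_tendsto_of_tendsto' ht1 ht2 fun j => hXs2 _ k
    · have ht1 : Filter.Tendsto (fun j => ip C (Xs (φ j + N)))
          Filter.atTop (nhds (ip C Xlim)) :=
        ((continuous_ip C).tendsto Xlim).comp hφtend
      have ht2 : Filter.Tendsto (fun j => (pseq (φ j + N)).2)
          Filter.atTop (nhds p.2) := hcd2.comp hφN
      exact le_of_tendsto_of_tendsto' ht1 ht2 fun j => hXs3 _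
  have hnotmem : (((0 : K → ℝ), pstar - ε) : (K → ℝ) × ℝ) ∉ 𝒜 := by
    rintro ⟨X, hXpsd, h1, h2⟩
    have hXfeas : ∀ k, ip (A k) X ≤ b k := fun k => by have := h1 k; simp at this; linarith
    have hXsymm : X.IsSymm := by
      rw [Matrix.IsSymm]; ext i j
      have := congrFun (congrFun hXpsd.1 i) j
      simpa [Matrix.conjTranspose_apply] using this
    have : ip C X ∈ P := ⟨X, hXsymm, hXpsd, hXfeas, rfl⟩
    have hle := csInf_le hPbdd this
    simp only at h2
    rw [← hpstar] at hle
    linarith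
  obtain ⟨f, u, hfa, hfx⟩ := geometric_hahn_banach_closed_point hconv hclosed hnotmem
  set lam : K → ℝ := fun k => -(f ((Pi.single k 1 : K → ℝ), (0:ℝ))) with hlamdef
  set μ := -(f ((0 : K → ℝ), (1:ℝ))) with hμdef
  set u' := -u with hu'def
  have hdecomp : ∀ (w : K → ℝ) (s : ℝ),
      -(f (w, s)) = (∑ k, lam k * w k) + μ * s := by
    intro w s
    rw [clm_decomp f w s, neg_add, ← Finset.sum_neg_distrib]
    rw [hμdef]
    congr 1
    · exact Finset.sum_congr rfl fun k _ => by rw [hlamdef]; ring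
    · ring
  have hstar : ∀ a ∈ 𝒜, u' < (∑ k, lam k * a.1 k) + μ * a.2 := by
    intro a ha
    have := hfa a ha
    rw [hu'def, ← hdecomp a.1 a.2]
    simp only [Prod.mk.eta]
    linarith
  have hstarX : ∀ X : Matrix (Fin (2*n)) (Fin (2*n)) ℝ, X.PosSemidef →
      u' < (∑ k, lam k * (ip (A k) X - b k)) + μ * ip C X := by
    intro X hX
    exact hstar ((fun k => ip (A k) X - b k), ip C X) ⟨X, hX, fun k => le_refl _, le_refl _⟩
  have hfx' : μ * (pstar - ε) < u' := by
    have h := hdecomp (0 : K → ℝ) (pstar - ε)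
    simp only [Pi.zero_apply, mul_zero, Finset.sum_const_zero, zero_add] at h
    rw [hu'def]
    linarith [hfx]
  -- λ ≥ 0
  have hlam_nonneg : ∀ k, 0 ≤ lam k := by
    intro k
    by_contra hneg
    push_neg at hneg
    set a₀ : (K → ℝ) × ℝ := ((fun k' => ip (A k') X₀ - b k'), ip C X₀) with ha₀def
    set R := (∑ k', lam k' * a₀.1 k') + μ * a₀.2 with hRdef
    have hR : u' < R := hstar a₀ ⟨X₀, hX₀psd, fun _ => le_refl _, le_refl _⟩
    set sc := (R - u') / (-(lam k)) with hscdef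
    have hsc : 0 ≤ sc := div_nonneg (by linarith) (by linarith)
    have hfst : ∀ k', (a₀ + sc • ((Pi.single k 1 : K → ℝ), (0:ℝ))).1 k'
        = a₀.1 k' + sc * (Pi.single k 1 : K → ℝ) k' := by intro k'; simp
    have hmem2 : a₀ + sc • ((Pi.single k 1 : K → ℝ), (0:ℝ)) ∈ 𝒜 := by
      refine ⟨X₀, hX₀psd, fun k' => ?_, by simp [ha₀def]⟩
      rw [hfst k']
      have h0 : 0 ≤ sc * (Pi.single k 1 : K → ℝ) k' :=
        mul_nonneg hsc (by by_cases h : k' = k <;> simp [Pi.single_apply, h])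
      have h1 : ip (A k') X₀ - b k' ≤ a₀.1 k' := le_refl _
      linarith
    have h2 := hstar _ hmem2
    have hsnd : (a₀ + sc • ((Pi.single k 1 : K → ℝ), (0:ℝ))).2 = a₀.2 := by simp
    rw [hsnd] at h2
    have hsum2 : (∑ k', lam k' * (a₀ + sc • ((Pi.single k 1 : K → ℝ), (0:ℝ))).1 k')
        = (∑ k', lam k' * a₀.1 k') + sc * lam k := by
      rw [Finset.sum_congr rfl fun k' _ => by rw [hfst k']]
      simp only [mul_add, Finset.sum_add_distrib]
      congr 1
      have hterm : ∀ k', lam k' * (sc * (Pi.single k 1 : K → ℝ) k')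
          = if k' = k then sc * lam k else 0 := by
        intro k'
        by_cases h : k' = k
        · subst h; simp [Pi.single_apply]; ring
        · simp [Pi.single_apply, h]
      rw [Finset.sum_congr rfl fun k' _ => hterm k']
      simp
    rw [hsum2] at h2
    have hlamne : -(lam k) ≠ 0 := by linarith
    have h3 : sc * lam k = -(R - u') := by
      rw [hscdef]
      have hlamne' : lam k ≠ 0 := fun h => hlamne (by rw [h, neg_zero])
      field_simp
    have hReq : R = (∑ k', lam k' * a₀.1 k') + μ * a₀.2 := hRdef
    linarith
  -- μ > 0
  have hlt : pstar < pstar + ε := lt_add_of_pos_right _ hε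
  obtain ⟨v₁, hv₁P, hv₁lt⟩ := exists_lt_of_csInf_lt hPne (show sInf P < pstar + ε from hlt)
  have hv₁ge : pstar ≤ v₁ := by rw [hpstar]; exact csInf_le hPbdd hv₁P
  obtain ⟨X₁, hX₁s, hX₁psd, hX₁feas, hv₁eq⟩ := hv₁P
  have hmem1 : (((0 : K → ℝ), v₁) : (K → ℝ) × ℝ) ∈ 𝒜 :=
    ⟨X₁, hX₁psd, fun k => by simp only [Pi.zero_apply]; linarith [hX₁feas k],
      by simp only []; linarith [le_of_eq hv₁eq.symm]⟩
  have h1 := hstar _ hmem1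
  simp only [Pi.zero_apply, mul_zero, Finset.sum_const_zero, zero_add] at h1
  have hμpos : 0 < μ := by
    by_contra h
    push_neg at h
    have hmono : μ * v₁ ≤ μ * (pstar - ε) :=
      mul_le_mul_of_nonpos_left (by linarith) h
    linarith
  -- the dual multiplier
  set α : K → ℝ := fun k => lam k / μ with hαdef
  have hαnn : ∀ k, 0 ≤ α k := fun k => div_nonneg (hlam_nonneg k) hμpos.le
  have hstarX' : ∀ X : Matrix (Fin (2*n)) (Fin (2*n)) ℝ, X.PosSemidef →
      u' < (∑ k, lam k * (ip (A k) X - b k)) + μ * ip C X := hstarX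
  set β := ∑ k, lam k * b k with hβdef
  -- PSD of C + ∑ α k • A k
  have hMpsd : (C + ∑ k, α k • A k).PosSemidef := by
    refine posSemidef_of_symm_qf ?_ ?_
    · rw [Matrix.IsSymm, Matrix.transpose_add, hC, Matrix.transpose_sum]
      congr 1
      exact Finset.sum_congr rfl fun k _ => by rw [Matrix.transpose_smul, hA k]
    · intro x
      set c₁ := (∑ k, lam k * qf (A k) x) + μ * qf C x with hc₁def
      have key : ∀ s : ℝ, 0 ≤ s → u' + β < s * c₁ := by
        intro s hs
        have h := hstarX' (s • vecMulVec x x) (psd_smul (psd_vecMulVec x) hs)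
        have e1 : ∀ k, ip (A k) (s • vecMulVec x x) = s * qf (A k) x := fun k => by
          rw [ip_smul_right, qf_eq_ip]
        have e2 : ip C (s • vecMulVec x x) = s * qf C x := by rw [ip_smul_right, qf_eq_ip]
        have e1' : (∑ k, lam k * (ip (A k) (s • vecMulVec x x) - b k))
            = ∑ k, lam k * (s * qf (A k) x - b k) :=
          Finset.sum_congr rfl fun k _ => by rw [e1 k]
        rw [e2, e1'] at h
        have e3 : (∑ k, lam k * (s * qf (A k) x - b k))
            = s * (∑ k, lam k * qf (A k) x) - β := by
          rw [hβdef, Finset.mul_sum, ← Finset.sum_sub_distrib]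
          exact Finset.sum_congr rfl fun k _ => by ring
        rw [e3] at h
        have e4 : s * c₁ = s * (∑ k, lam k * qf (A k) x) + μ * (s * qf C x) := by
          rw [hc₁def]; ring
        linarith
      have h0 := key 0 le_rfl
      rw [zero_mul] at h0
      have hc₁nn : 0 ≤ c₁ := by
        by_contra hc₁
        push_neg at hc₁
        have hsc : 0 ≤ (u' + β) / c₁ :=
          div_nonneg_iff.mpr (Or.inr ⟨le_of_lt h0, hc₁.le⟩)
        have := key _ hsc
        rw [div_mul_cancel₀ _ (ne_of_lt hc₁)] at this
        linarith
      have hqfM : qf (C + ∑ k, α k • A k) x = c₁ / μ := by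
        have hsmul : ∀ k : K, qf (α k • A k) x = (lam k / μ) * qf (A k) x := fun k => by
          rw [hαdef, qf_smul]
        have hsum : (∑ k, (lam k / μ) * qf (A k) x)
            = (∑ k, lam k * qf (A k) x) / μ := by
          rw [Finset.sum_div]
          exact Finset.sum_congr rfl fun k _ => by ring
        rw [qf_add, qf_sum, Finset.sum_congr rfl fun k _ => hsmul k, hsum, hc₁def, add_div,
          mul_div_cancel_left₀ _ (ne_of_gt hμpos)]
        ring
      rw [hqfM]
      exact div_nonneg hc₁nn hμpos.le
  -- value of the dual point
  have hzero := hstarX' 0 Matrix.PosSemidef.zero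
  have hz1 : (∑ k, lam k * (ip (A k) (0 : Matrix (Fin (2*n)) (Fin (2*n)) ℝ) - b k)) = -β := by
    rw [hβdef, ← Finset.sum_neg_distrib]
    exact Finset.sum_congr rfl fun k _ => by rw [ip_zero_right]; ring
  rw [hz1, ip_zero_right, mul_zero, add_zero] at hzero
  have hval : (∑ k, -(b k) * α k) = (-β) / μ := by
    rw [hβdef, hαdef, ← Finset.sum_neg_distrib, Finset.sum_div]
    exact Finset.sum_congr rfl fun k _ => by ring
  have hDmem2 : (∑ k, -(b k) * α k) ∈ D := ⟨α, hαnn, hMpsd, rfl⟩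
  have hfinal : pstar - ε < (∑ k, -(b k) * α k) := by
    rw [hval, lt_div_iff₀ hμpos]
    have := mul_comm (pstar - ε) μ
    linarith
  have hsup := le_csSup hDbdd hDmem2
  rw [hpstar]
  linarith
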